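/- Let (x₁,y₁) and (x₂,y₂) be points of the Okubic affine plane with x₁ ≠ x₂. Then there exists a unique pair (s,t) ∈ 𝒪×𝒪 such that y₁ = s*x₁ + t and y₂ = s*x₂ + t; moreover the slope is s = n(x₁−x₂)⁻¹·((x₁−x₂)*(y₁−y₂)). -/
import Mathlib

open Matrix Complex

noncomputable section

/-- `3 × 3` complex matrices. -/
abbrev M3 : Type := Matrix (Fin 3) (Fin 3) ℂ

/-- The real Okubo algebra: `3 × 3` traceless Hermitian complex matrices. -/
def Okubo : Set M3 := {x | x.IsHermitian ∧ x.trace = 0}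

/-- The constant `μ = (3 + i√3)/6`. -/
def okMu : ℂ := (3 + (Real.sqrt 3 : ℂ) * Complex.I) / 6

/-- The Okubo product `x*y = μ·(xy) + μ̄·(yx) − (1/3)Tr(xy)·Id`. -/
def omul (x y : M3) : M3 :=
  okMu • (x * y) + (starRingEnd ℂ) okMu • (y * x) - ((1 / 3 : ℂ) * (x * y).trace) • (1 : M3)

/-- The Okubic norm `n(x) = (1/6)Tr(x²)` (real-valued on Hermitian matrices). -/
def onorm (x : M3) : ℝ := (1 / 6) * ((x * x).trace).re

/-- The polar form `⟨x,y⟩ = n(x+y) − n(x) − n(y)` of the Okubic norm. -/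
def opolar (x y : M3) : ℝ := onorm (x + y) - onorm x - onorm y

/- ### Auxiliary lemmas -/

lemma okMu_conj : (starRingEnd ℂ) okMu = (3 - (Real.sqrt 3 : ℂ) * Complex.I) / 6 := by
  simp [okMu, map_div₀, map_ofNat, Complex.conj_I, Complex.conj_ofReal]
  ring

lemma okMu_add : okMu + (starRingEnd ℂ) okMu = 1 := by
  rw [okMu_conj, okMu]; ring

lemma okMu_mul : okMu * (starRingEnd ℂ) okMu = 1/3 := by
  rw [okMu_conj, okMu]
  have h3 : ((Real.sqrt 3 : ℝ):ℂ) * ((Real.sqrt 3 : ℝ):ℂ) = 3 := by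
    norm_cast
    rw [Real.mul_self_sqrt] <;> norm_num
  field_simp
  linear_combination (3 - 3*(Complex.I^2 + 1)) * h3 + (-9 : ℂ) * Complex.I_sq

lemma okMu_sq_add : okMu^2 + ((starRingEnd ℂ) okMu)^2 = 1/3 := by
  linear_combination (okMu + (starRingEnd ℂ) okMu + 1) * okMu_add - 2 * okMu_mul

/-- Polarized Cayley–Hamilton identity for traceless 3×3 matrices. -/
lemma key_id (x y : M3) (hx : x.trace = 0) (hy : y.trace = 0) :
    x*(x*y) + x*(y*x) + y*(x*x) =
      (x*y).trace • x + ((1/2:ℂ) * (x*x).trace) • y + (x*(x*y)).trace • (1:M3) := by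
  rw [Matrix.trace_fin_three] at hx hy
  have hx' : x 2 2 = -(x 0 0 + x 1 1) := by linear_combination hx
  have hy' : y 2 2 = -(y 0 0 + y 1 1) := by linear_combination hy
  ext i j
  fin_cases i <;> fin_cases j <;>
    (simp [Matrix.mul_apply, Matrix.trace_fin_three, Fin.sum_univ_three, Matrix.one_apply,
      hx', hy']; ring)

/-- `x*(y*x) = n(x)·y` (complex-scalar form), for traceless `x`, `y`. -/
lemma omul_omul_right (x y : M3) (hx : x.trace = 0) (hy : y.trace = 0) :
    omul x (omul y x) = ((1/6:ℂ) * (x*x).trace) • y := by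
  have key := key_id x y hx hy
  have hxyx : x*(y*x) = (x*y).trace • x + ((1/2:ℂ)*(x*x).trace) • y
      + (x*(x*y)).trace • (1:M3) - x*(x*y) - y*(x*x) := by
    rw [← key]; abel
  have h1 : (x*(y*x)).trace = (x*(x*y)).trace := by
    rw [← Matrix.mul_assoc, ← Matrix.mul_assoc, Matrix.trace_mul_cycle]
  have h2 : (y*x).trace = (x*y).trace := Matrix.trace_mul_comm y x
  have h3 : (y*(x*x)).trace = (x*(x*y)).trace := by
    rw [← Matrix.mul_assoc, ← Matrix.mul_assoc, Matrix.trace_mul_cycle, Matrix.trace_mul_cycle]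
  unfold omul
  simp only [Matrix.mul_add, Matrix.mul_sub, Matrix.add_mul, Matrix.sub_mul,
    Matrix.mul_smul, Matrix.smul_mul, Matrix.mul_one, Matrix.one_mul,
    trace_add, trace_sub, trace_smul, smul_add, smul_sub, smul_smul,
    trace_one, hx, hy, Fintype.card_fin, Matrix.mul_assoc, smul_eq_mul, h1, h2, h3, hxyx]
  match_scalars
  · linear_combination ((x*y).trace) * okMu_sq_add - ((x*y).trace/3) * okMu_add
  · linear_combination ((1/2:ℂ)*(x*x).trace) * okMu_sq_add
  · linear_combination ((x*(x*y)).trace) * okMu_sq_add - ((x*(x*y)).trace/3) * okMu_add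
  · linear_combination okMu_mul - okMu_sq_add
  · linear_combination okMu_mul - okMu_sq_add

/-- `(x*y)*x = n(x)·y` (complex-scalar form), for traceless `x`, `y`. -/
lemma omul_omul_left (x y : M3) (hx : x.trace = 0) (hy : y.trace = 0) :
    omul (omul x y) x = ((1/6:ℂ) * (x*x).trace) • y := by
  have key := key_id x y hx hy
  have hxyx : x*(y*x) = (x*y).trace • x + ((1/2:ℂ)*(x*x).trace) • y
      + (x*(x*y)).trace • (1:M3) - x*(x*y) - y*(x*x) := by
    rw [← key]; abel
  have h1 : (x*(y*x)).trace = (x*(x*y)).trace := by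
    rw [← Matrix.mul_assoc, ← Matrix.mul_assoc, Matrix.trace_mul_cycle]
  have h2 : (y*x).trace = (x*y).trace := Matrix.trace_mul_comm y x
  have h3 : (y*(x*x)).trace = (x*(x*y)).trace := by
    rw [← Matrix.mul_assoc, ← Matrix.mul_assoc, Matrix.trace_mul_cycle, Matrix.trace_mul_cycle]
  unfold omul
  simp only [Matrix.mul_add, Matrix.mul_sub, Matrix.add_mul, Matrix.sub_mul,
    Matrix.mul_smul, Matrix.smul_mul, Matrix.mul_one, Matrix.one_mul,
    trace_add, trace_sub, trace_smul, smul_add, smul_sub, smul_smul,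
    trace_one, hx, hy, Fintype.card_fin, Matrix.mul_assoc, smul_eq_mul, h1, h2, h3, hxyx]
  match_scalars
  · linear_combination ((x*y).trace) * okMu_sq_add - ((x*y).trace/3) * okMu_add
  · linear_combination ((1/2:ℂ)*(x*x).trace) * okMu_sq_add
  · linear_combination ((x*(x*y)).trace) * okMu_sq_add - ((x*(x*y)).trace/3) * okMu_add
  · linear_combination okMu_mul - okMu_sq_add
  · linear_combination okMu_mul - okMu_sq_add

lemma real_smul_eq (r : ℝ) (A : M3) : ((r : ℂ)) • A = r • A := by
  ext i j
  simp [Matrix.smul_apply, Complex.real_smul]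

lemma trace_sq_real (x : M3) (hx : x.IsHermitian) :
    (x*x).trace = ((∑ i, ∑ j, Complex.normSq (x i j) : ℝ) : ℂ) := by
  rw [Matrix.trace]
  push_cast
  simp only [Matrix.diag, Matrix.mul_apply]
  refine Finset.sum_congr rfl fun i _ => Finset.sum_congr rfl fun j _ => ?_
  have hji : x j i = star (x i j) := by
    conv_lhs => rw [← hx]
    simp [Matrix.conjTranspose_apply]
  rw [hji]
  exact Complex.mul_conj _

lemma onorm_eq (x : M3) (hx : x.IsHermitian) :
    onorm x = (1/6) * ∑ i, ∑ j, Complex.normSq (x i j) := by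
  unfold onorm
  rw [trace_sq_real x hx, Complex.ofReal_re]

lemma onorm_pos (x : M3) (hx : x.IsHermitian) (h0 : x ≠ 0) : 0 < onorm x := by
  rw [onorm_eq x hx]
  have hex : ∃ i j, x i j ≠ 0 := by
    by_contra h
    push_neg at h
    exact h0 (by ext i j; simp [h])
  obtain ⟨i, j, hij⟩ := hex
  have : (0:ℝ) < ∑ i, ∑ j, Complex.normSq (x i j) := by
    refine Finset.sum_pos' (fun a _ => Finset.sum_nonneg fun b _ => Complex.normSq_nonneg _)
      ⟨i, Finset.mem_univ i, ?_⟩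
    refine Finset.sum_pos' (fun b _ => Complex.normSq_nonneg _)
      ⟨j, Finset.mem_univ j, Complex.normSq_pos.mpr hij⟩
  linarith

/-- Real-smul version of the identities, for `x ∈ Okubo`. -/
lemma omul_norm_right (x y : M3) (hx : x ∈ Okubo) (hy : y.trace = 0) :
    omul x (omul y x) = onorm x • y := by
  rw [omul_omul_right x y hx.2 hy, ← real_smul_eq]
  congr 1
  rw [trace_sq_real x hx.1, onorm_eq x hx.1]
  push_cast
  ring

lemma omul_norm_left (x y : M3) (hx : x ∈ Okubo) (hy : y.trace = 0) :
    omul (omul x y) x = onorm x • y := by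
  rw [omul_omul_left x y hx.2 hy, ← real_smul_eq]
  congr 1
  rw [trace_sq_real x hx.1, onorm_eq x hx.1]
  push_cast
  ring

lemma omul_mem {x y : M3} (hx : x ∈ Okubo) (hy : y ∈ Okubo) : omul x y ∈ Okubo := by
  have htr : (starRingEnd ℂ) (x*y).trace = (x*y).trace := by
    have : ((x*y)ᴴ).trace = star (x*y).trace := Matrix.trace_conjTranspose (x*y)
    rw [Matrix.conjTranspose_mul, hx.1, hy.1, Matrix.trace_mul_comm] at this
    exact this.symm
  constructor
  · show (omul x y)ᴴ = omul x y
    unfold omul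
    have hc : star ((1/3:ℂ) * (x*y).trace) = (1/3:ℂ) * (x*y).trace := by
      rw [star_mul', show star ((1/3:ℂ)) = (1/3:ℂ) by norm_num,
        show star (x*y).trace = (x*y).trace from htr, mul_comm]
    rw [Matrix.conjTranspose_sub, Matrix.conjTranspose_add, Matrix.conjTranspose_smul,
      Matrix.conjTranspose_smul, Matrix.conjTranspose_smul, Matrix.conjTranspose_mul,
      Matrix.conjTranspose_mul, Matrix.conjTranspose_one, hx.1, hy.1, hc]
    simp only [starRingEnd_apply, star_star]
    abel
  · show (omul x y).trace = 0
    unfold omul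
    rw [trace_sub, trace_add, trace_smul, trace_smul, trace_smul, Matrix.trace_one,
      Matrix.trace_mul_comm y x]
    simp only [smul_eq_mul, Fintype.card_fin]
    push_cast
    linear_combination (x*y).trace * okMu_add

lemma okubo_sub_mem {x y : M3} (hx : x ∈ Okubo) (hy : y ∈ Okubo) : x - y ∈ Okubo :=
  ⟨hx.1.sub hy.1, by rw [trace_sub, hx.2, hy.2, sub_zero]⟩

lemma okubo_rsmul_mem {x : M3} (r : ℝ) (hx : x ∈ Okubo) : r • x ∈ Okubo := by
  constructor
  · show (r • x)ᴴ = r • x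
    rw [← real_smul_eq, Matrix.conjTranspose_smul, hx.1, Complex.star_def, Complex.conj_ofReal]
  · show (r • x).trace = 0
    rw [← real_smul_eq, trace_smul, hx.2, smul_zero]

lemma omul_sub_right (s a b : M3) : omul s (a - b) = omul s a - omul s b := by
  simp only [omul, Matrix.mul_sub, Matrix.sub_mul, trace_sub, mul_sub, sub_smul, smul_sub]
  abel

lemma omul_sub_left (s s' x : M3) : omul (s - s') x = omul s x - omul s' x := by
  simp only [omul, Matrix.mul_sub, Matrix.sub_mul, trace_sub, mul_sub, sub_smul, smul_sub]
  abel

lemma omul_csmul_left (c : ℂ) (s x : M3) : omul (c • s) x = c • omul s x := by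
  simp only [omul, Matrix.smul_mul, Matrix.mul_smul, trace_smul, smul_eq_mul]
  match_scalars <;> ring

lemma omul_rsmul_left (r : ℝ) (s x : M3) : omul (r • s) x = r • omul s x := by
  rw [← real_smul_eq, omul_csmul_left, real_smul_eq]

lemma omul_zero_right (x : M3) : omul x 0 = 0 := by
  simp [omul]

theorem okubo_paper_stmt11 (x₁ y₁ x₂ y₂ : M3)
    (hx₁ : x₁ ∈ Okubo) (hy₁ : y₁ ∈ Okubo) (hx₂ : x₂ ∈ Okubo) (hy₂ : y₂ ∈ Okubo)
    (hne : x₁ ≠ x₂) :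
    (∃! p : M3 × M3, p.1 ∈ Okubo ∧ p.2 ∈ Okubo ∧
      y₁ = omul p.1 x₁ + p.2 ∧ y₂ = omul p.1 x₂ + p.2) ∧
    (∀ s ∈ Okubo, ∀ t ∈ Okubo,
      y₁ = omul s x₁ + t → y₂ = omul s x₂ + t →
        s = (onorm (x₁ - x₂))⁻¹ • omul (x₁ - x₂) (y₁ - y₂)) := by
  set x : M3 := x₁ - x₂ with hxdef
  set z : M3 := y₁ - y₂ with hzdef
  have hx : x ∈ Okubo := okubo_sub_mem hx₁ hx₂
  have hz : z ∈ Okubo := okubo_sub_mem hy₁ hy₂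
  have hx0 : x ≠ 0 := sub_ne_zero.mpr hne
  have hn : 0 < onorm x := onorm_pos x hx.1 hx0
  have hn' : onorm x ≠ 0 := ne_of_gt hn
  -- the slope
  set s₀ : M3 := (onorm x)⁻¹ • omul x z with hs₀
  have hs₀mem : s₀ ∈ Okubo := okubo_rsmul_mem _ (omul_mem hx hz)
  have hs₀x : omul s₀ x = z := by
    rw [hs₀, omul_rsmul_left, omul_norm_left x z hx hz.2, smul_smul, inv_mul_cancel₀ hn',
      one_smul]
  -- the slope formula for any solution
  have hslope : ∀ s t : M3, s ∈ Okubo → t ∈ Okubo →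
      y₁ = omul s x₁ + t → y₂ = omul s x₂ + t → s = (onorm x)⁻¹ • omul x z := by
    intro s t hs ht h1 h2
    have hzx : z = omul s x := by
      rw [hzdef, h1, h2, hxdef, omul_sub_right]
      abel
    rw [hzx, omul_norm_right x s hx hs.2, smul_smul, inv_mul_cancel₀ hn', one_smul]
  set t₀ : M3 := y₁ - omul s₀ x₁ with ht₀
  have ht₀mem : t₀ ∈ Okubo := okubo_sub_mem hy₁ (omul_mem hs₀mem hx₁)
  have he₁ : y₁ = omul s₀ x₁ + t₀ := by rw [ht₀]; abel
  have he₂ : y₂ = omul s₀ x₂ + t₀ := by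
    have h : omul s₀ x₁ - omul s₀ x₂ = y₁ - y₂ := by
      rw [← omul_sub_right, ← hxdef, hs₀x, hzdef]
    have h2 : omul s₀ x₂ + (y₁ - omul s₀ x₁) = y₁ - (omul s₀ x₁ - omul s₀ x₂) := by abel
    rw [ht₀, h2, h]
    abel
  constructor
  · refine ⟨(s₀, t₀), ⟨hs₀mem, ht₀mem, he₁, he₂⟩, ?_⟩
    rintro ⟨s, t⟩ ⟨hs, ht, h1, h2⟩
    have hss : s = s₀ := hslope s t hs ht h1 h2
    have htt : t = t₀ := by
      rw [ht₀, ← hss]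
      rw [h1]; abel
    simp [hss, htt]
  · intro s hs t ht h1 h2
    exact hslope s t hs ht h1 h2

end
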